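/- For every integer m ≥ 0, the product P_m = ∏_{j=0}^{m} 4(3j+1)(3j+2)/(d₂(3j+1)·d₂(3j+2)) satisfies P_m ≤ (3m+2)·2^{4m+4}, where d₂(n) denotes the largest odd divisor of n. -/

import Mathlib

/-- `d₂ n` is the largest odd divisor of `n`. -/
def d2 (n : ℕ) : ℕ := n / 2 ^ (n.factorization 2)

private lemma d2_mul_pow (n : ℕ) (_hn : n ≠ 0) :
    (d2 n : ℚ) * 2 ^ (padicValNat 2 n) = n := by
  have h := Nat.ordProj_mul_ordCompl_eq_self n 2
  rw [Nat.factorization_def n Nat.prime_two] at h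
  have : (2 ^ padicValNat 2 n * (n / 2 ^ padicValNat 2 n) : ℕ) = n := h
  have := congrArg (fun x : ℕ => (x : ℚ)) this
  push_cast at this
  rw [d2, Nat.factorization_def n Nat.prime_two]
  linarith [this]

private lemma d2_ne_zero (n : ℕ) (hn : n ≠ 0) : (d2 n : ℚ) ≠ 0 := by
  have := Nat.ordCompl_pos 2 hn
  rw [d2, Nat.factorization_def n Nat.prime_two]
  exact_mod_cast (Nat.ordCompl_pos 2 hn).ne'

private lemma term_eq (j : ℕ) :
    (4 * (3 * (j : ℚ) + 1) * (3 * (j : ℚ) + 2)) / ((d2 (3 * j + 1) : ℚ) * (d2 (3 * j + 2) : ℚ))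
      = 4 * 2 ^ (padicValNat 2 (3 * j + 1) + padicValNat 2 (3 * j + 2)) := by
  have h1 := d2_mul_pow (3 * j + 1) (by omega)
  have h2 := d2_mul_pow (3 * j + 2) (by omega)
  have n1 := d2_ne_zero (3 * j + 1) (by omega)
  have n2 := d2_ne_zero (3 * j + 2) (by omega)
  push_cast at h1 h2
  rw [pow_add]
  field_simp
  rw [← h1, ← h2]
  ring

private lemma sum_val_eq (m : ℕ) :
    (∑ j ∈ Finset.range (m + 1),
        (padicValNat 2 (3 * j + 1) + padicValNat 2 (3 * j + 2)))
      + padicValNat 2 (Nat.factorial m) = padicValNat 2 (Nat.factorial (3 * m + 2)) := by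
  induction m with
  | zero => simp [Nat.factorial]
  | succ m ih =>
    have fne : ∀ k : ℕ, Nat.factorial k ≠ 0 := fun k => Nat.factorial_ne_zero k
    have h3 : (3 * (m + 1) + 2) = (3 * m + 2) + 3 := by ring
    have e1 : Nat.factorial (3 * (m + 1) + 2)
        = (3 * m + 5) * ((3 * m + 4) * ((3 * m + 3) * Nat.factorial (3 * m + 2))) := by
      rw [h3]
      show Nat.factorial (3 * m + 2 + 2 + 1) = _
      rw [Nat.factorial_succ, Nat.factorial_succ, Nat.factorial_succ]
    have e2 : Nat.factorial (m + 1) = (m + 1) * Nat.factorial m := Nat.factorial_succ m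
    haveI : Fact (Nat.Prime 2) := ⟨Nat.prime_two⟩
    have key : padicValNat 2 ((3 * m + 5) * ((3 * m + 4) * ((3 * m + 3) * Nat.factorial (3 * m + 2))))
        = padicValNat 2 (3 * m + 5) + (padicValNat 2 (3 * m + 4)
          + (padicValNat 2 (3 * m + 3) + padicValNat 2 (Nat.factorial (3 * m + 2)))) := by
      rw [padicValNat.mul (by omega) (by positivity),
        padicValNat.mul (by omega) (by positivity),
        padicValNat.mul (by omega) (fne _)]
    have key2 : padicValNat 2 ((m + 1) * Nat.factorial m)
        = padicValNat 2 (m + 1) + padicValNat 2 (Nat.factorial m) :=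
      padicValNat.mul (by omega) (fne _)
    rw [e1, e2, key, key2]
    have h33 : (3 * m + 3 : ℕ) = 3 * (m + 1) := by ring
    have hv3 : padicValNat 2 (3 * m + 3) = padicValNat 2 (m + 1) := by
      rw [h33, padicValNat.mul (by norm_num) (by omega),
        padicValNat.eq_zero_of_not_dvd (by norm_num), zero_add]
    rw [Finset.sum_range_succ]
    have : 3 * (m + 1) + 1 = 3 * m + 4 := by ring
    rw [this]
    have : 3 * (m + 1) + 2 = 3 * m + 5 := by ring
    rw [this]
    omega

private lemma sum_digits_ge_one {n : ℕ} (hn : n ≠ 0) : 1 ≤ (Nat.digits 2 n).sum := by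
  have hne : Nat.digits 2 n ≠ [] := Nat.digits_ne_nil_iff_ne_zero.mpr hn
  have hlast := Nat.getLast_digit_ne_zero 2 hn
  have hmem : (Nat.digits 2 n).getLast hne ∈ Nat.digits 2 n := List.getLast_mem hne
  calc 1 ≤ (Nat.digits 2 n).getLast hne := Nat.one_le_iff_ne_zero.mpr hlast
    _ ≤ (Nat.digits 2 n).sum := List.single_le_sum (fun _ _ => Nat.zero_le _) _ hmem

private lemma pow_sum_digits_le (m : ℕ) : 2 ^ (Nat.digits 2 m).sum ≤ 2 * (3 * m + 2) := by
  rcases eq_or_ne m 0 with rfl | hm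
  · simp
  · have hlen : (Nat.digits 2 m).length = Nat.log 2 m + 1 := Nat.digits_len 2 m (by norm_num) hm
    have hsum : (Nat.digits 2 m).sum ≤ (Nat.digits 2 m).length := by
      calc (Nat.digits 2 m).sum ≤ (Nat.digits 2 m).length * 1 :=
            List.sum_le_card_nsmul _ 1 (fun x hx => by
              have := Nat.digits_lt_base (by norm_num) hx; omega)
        _ = (Nat.digits 2 m).length := by ring
    calc 2 ^ (Nat.digits 2 m).sum ≤ 2 ^ (Nat.log 2 m + 1) :=
          Nat.pow_le_pow_right (by norm_num) (by omega)
      _ = 2 * 2 ^ Nat.log 2 m := by ring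
      _ ≤ 2 * m := by
          have := Nat.pow_log_le_self 2 hm; omega
      _ ≤ 2 * (3 * m + 2) := by omega

/-- For every integer `m ≥ 0`, the product
`P_m = ∏_{j=0}^{m} 4(3j+1)(3j+2)/(d₂(3j+1)·d₂(3j+2))` satisfies
`P_m ≤ (3m+2)·2^{4m+4}`, where `d₂(n)` denotes the largest odd divisor of `n`. -/
theorem product_P_bound (m : ℕ) :
    ∏ j ∈ Finset.range (m + 1),
        (4 * (3 * (j : ℚ) + 1) * (3 * (j : ℚ) + 2)) / ((d2 (3 * j + 1) : ℚ) * (d2 (3 * j + 2) : ℚ))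
      ≤ (3 * (m : ℚ) + 2) * 2 ^ (4 * m + 4) := by
  haveI : Fact (Nat.Prime 2) := ⟨Nat.prime_two⟩
  set S : ℕ := ∑ j ∈ Finset.range (m + 1),
      (padicValNat 2 (3 * j + 1) + padicValNat 2 (3 * j + 2)) with hS
  have hprod : (∏ j ∈ Finset.range (m + 1),
      (4 * (3 * (j : ℚ) + 1) * (3 * (j : ℚ) + 2)) / ((d2 (3 * j + 1) : ℚ) * (d2 (3 * j + 2) : ℚ)))
      = 4 ^ (m + 1) * 2 ^ S := by
    calc (∏ j ∈ Finset.range (m + 1),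
        (4 * (3 * (j : ℚ) + 1) * (3 * (j : ℚ) + 2)) / ((d2 (3 * j + 1) : ℚ) * (d2 (3 * j + 2) : ℚ)))
        = ∏ j ∈ Finset.range (m + 1),
            (4 : ℚ) * 2 ^ (padicValNat 2 (3 * j + 1) + padicValNat 2 (3 * j + 2)) :=
          Finset.prod_congr rfl (fun j _ => term_eq j)
      _ = (∏ _j ∈ Finset.range (m + 1), (4 : ℚ))
            * ∏ j ∈ Finset.range (m + 1),
                (2 : ℚ) ^ (padicValNat 2 (3 * j + 1) + padicValNat 2 (3 * j + 2)) :=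
          Finset.prod_mul_distrib
      _ = 4 ^ (m + 1) * 2 ^ S := by
          rw [Finset.prod_const, Finset.card_range, Finset.prod_pow_eq_pow_sum, hS]
  -- Legendre bounds
  have hLeg1 : 1 * padicValNat 2 (Nat.factorial m) = m - (Nat.digits 2 m).sum := by
    have := sub_one_mul_padicValNat_factorial (p := 2) m
    simpa using this
  have hLeg2 : 1 * padicValNat 2 (Nat.factorial (3 * m + 2))
      = (3 * m + 2) - (Nat.digits 2 (3 * m + 2)).sum := by
    have := sub_one_mul_padicValNat_factorial (p := 2) (3 * m + 2)
    simpa using this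
  have hge1 : 1 ≤ (Nat.digits 2 (3 * m + 2)).sum := sum_digits_ge_one (by omega)
  have hkey := sum_val_eq m
  rw [← hS] at hkey
  have hSle : S ≤ 2 * m + 1 + (Nat.digits 2 m).sum := by omega
  have hnat : 2 ^ (2 * m + 2 + S) ≤ (3 * m + 2) * 2 ^ (4 * m + 4) := by
    calc 2 ^ (2 * m + 2 + S) ≤ 2 ^ (4 * m + 3 + (Nat.digits 2 m).sum) :=
          Nat.pow_le_pow_right (by norm_num) (by omega)
      _ = 2 ^ (4 * m + 3) * 2 ^ (Nat.digits 2 m).sum := pow_add 2 _ _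
      _ ≤ 2 ^ (4 * m + 3) * (2 * (3 * m + 2)) :=
          Nat.mul_le_mul_left _ (pow_sum_digits_le m)
      _ = (3 * m + 2) * 2 ^ (4 * m + 4) := by ring
  rw [hprod]
  have h4 : (4 : ℚ) ^ (m + 1) * 2 ^ S = 2 ^ (2 * m + 2 + S) := by
    rw [show (4 : ℚ) = 2 ^ 2 by norm_num, ← pow_mul, ← pow_add]
    ring_nf
  rw [h4]
  calc ((2 : ℚ)) ^ (2 * m + 2 + S) = ((2 ^ (2 * m + 2 + S) : ℕ) : ℚ) := by push_cast; ring
    _ ≤ (((3 * m + 2) * 2 ^ (4 * m + 4) : ℕ) : ℚ) := by exact_mod_cast hnat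
    _ = (3 * (m : ℚ) + 2) * 2 ^ (4 * m + 4) := by push_cast; ring
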